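/- Let G be a finite group, p a prime, and P a Sylow p-subgroup of G. If (∏_{x ∈ P} λ_G(x))^p ≤ n_p(G)^{|P|}, then |𝔘_p(G)|^p ≥ |P|^p · n_p(G)^{p-1} (equivalently, the p-Frobenius ratio |𝔘_p(G)|/|P| is at least n_p(G)^{(p-1)/p}). -/

import Mathlib

open Subgroup Pointwise

/-- `λ_G(x)`: the number of Sylow `p`-subgroups of `G` containing `x`. -/
noncomputable def sylCount (p : ℕ) {G : Type*} [Group G] (x : G) : ℕ :=
  Nat.card {Q : Sylow p G // x ∈ Q}

/-- Unweighted AM-GM in natural-power form. -/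
lemma amgm_pow_card {ι : Type*} (s : Finset ι) (a : ι → ℝ) (ha : ∀ i ∈ s, 0 ≤ a i) :
    (s.card : ℝ) ^ s.card * ∏ i ∈ s, a i ≤ (∑ i ∈ s, a i) ^ s.card := by
  rcases Finset.eq_empty_or_nonempty s with rfl | hs
  · simp
  have hk : (0 : ℝ) < s.card := by exact_mod_cast hs.card_pos
  have hw : ∑ _i ∈ s, ((s.card : ℝ))⁻¹ = 1 := by
    rw [Finset.sum_const, nsmul_eq_mul, mul_inv_cancel₀ hk.ne']
  have h := Real.geom_mean_le_arith_mean_weighted s (fun _ => (s.card : ℝ)⁻¹) a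
      (fun i _ => by positivity) hw ha
  have h2 := pow_le_pow_left₀
    (Finset.prod_nonneg fun i hi => Real.rpow_nonneg (ha i hi) _) h s.card
  rw [← Finset.prod_pow] at h2
  have hprod : ∀ i ∈ s, (a i ^ ((s.card : ℝ)⁻¹)) ^ s.card = a i := by
    intro i hi
    rw [← Real.rpow_natCast (a i ^ ((s.card : ℝ)⁻¹)) s.card, ← Real.rpow_mul (ha i hi),
      inv_mul_cancel₀ hk.ne', Real.rpow_one]
  rw [Finset.prod_congr rfl hprod] at h2
  have hsum : ∑ i ∈ s, (s.card : ℝ)⁻¹ * a i = (s.card : ℝ)⁻¹ * ∑ i ∈ s, a i :=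
    (Finset.mul_sum _ _ _).symm
  rw [hsum, mul_pow] at h2
  calc (s.card : ℝ) ^ s.card * ∏ i ∈ s, a i
      ≤ (s.card : ℝ) ^ s.card * (((s.card : ℝ)⁻¹) ^ s.card * (∑ i ∈ s, a i) ^ s.card) := by
        exact mul_le_mul_of_nonneg_left h2 (by positivity)
    _ = (∑ i ∈ s, a i) ^ s.card := by
        rw [← mul_assoc, ← mul_pow, mul_inv_cancel₀ hk.ne', one_pow, one_mul]


lemma conj_mem_smul_sylow {G : Type*} [Group G] {p : ℕ} (g x : G) (Q : Sylow p G) :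
    g * x * g⁻¹ ∈ (g • Q : Sylow p G) ↔ x ∈ Q := by
  have hco : ((g • Q : Sylow p G) : Set G) = (MulAut.conj g) • (Q : Set G) := Sylow.coe_smul
  rw [← SetLike.mem_coe, hco, Set.mem_smul_set_iff_inv_smul_mem]
  have hx : (MulAut.conj g)⁻¹ • (g * x * g⁻¹) = x := by
    rw [← map_inv, MulAut.smul_def, MulAut.conj_apply]
    group
  rw [hx, SetLike.mem_coe]

/-- If `(∏_{x ∈ P} λ_G(x))^p ≤ n_p(G)^{|P|}`, then the `p`-Frobenius ratio satisfies
`|𝔘_p(G)|/|P| ≥ n_p(G)^{(p-1)/p}`, i.e. `|𝔘_p(G)|^p ≥ |P|^p · n_p(G)^{p-1}`. -/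
theorem frobenius_ratio_of_lambda_ineq {G : Type*} [Group G] [Fintype G]
    (p : ℕ) (hp : p.Prime) (P : Sylow p G)
    (hlam : (∏ᶠ x ∈ ((P : Subgroup G) : Set G), sylCount p x) ^ p ≤
      Nat.card (Sylow p G) ^ Nat.card (P : Subgroup G)) :
    Nat.card (P : Subgroup G) ^ p * Nat.card (Sylow p G) ^ (p - 1) ≤
      Nat.card {g : G | ∃ n : ℕ, orderOf g = p ^ n} ^ p := by
  classical
  haveI hFp : Fact p.Prime := ⟨hp⟩
  haveI : Finite (Sylow p G) :=
    Finite.of_injective (fun Q : Sylow p G => (Q : Set G)) SetLike.coe_injective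
  haveI : Fintype (Sylow p G) := Fintype.ofFinite _
  set N := Nat.card (Sylow p G) with hN
  set k := Nat.card (P : Subgroup G) with hk
  -- Finset versions
  set sU : Finset G := Finset.univ.filter (fun x => ∃ n : ℕ, orderOf x = p ^ n) with hsU
  have sQ : Sylow p G → Finset G := fun Q => Finset.univ.filter (· ∈ Q)
  -- λ as a filter card
  have hlamcard : ∀ x : G,
      sylCount p x = (Finset.univ.filter (fun Q : Sylow p G => x ∈ Q)).card := by
    intro x
    rw [sylCount, Nat.card_eq_fintype_card, Fintype.card_subtype]
  -- membership in some Sylow iff p-element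
  have hmemU : ∀ x : G, (∃ n : ℕ, orderOf x = p ^ n) ↔ ∃ Q : Sylow p G, x ∈ Q := by
    intro x
    constructor
    · rintro ⟨n, hn⟩
      have : IsPGroup p (Subgroup.zpowers x) :=
        IsPGroup.of_card (by rw [Nat.card_zpowers, hn])
      obtain ⟨Q, hQ⟩ := this.exists_le_sylow
      exact ⟨Q, hQ (Subgroup.mem_zpowers x)⟩
    · rintro ⟨Q, hQ⟩
      obtain ⟨n, hn⟩ := IsPGroup.iff_orderOf.mp Q.2 ⟨x, hQ⟩
      exact ⟨n, by rwa [Subgroup.orderOf_mk] at hn⟩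
  have hlampos : ∀ {x : G} {Q : Sylow p G}, x ∈ Q → 0 < sylCount p x := by
    intro x Q hx
    haveI : Nonempty {R : Sylow p G // x ∈ R} := ⟨⟨Q, hx⟩⟩
    exact Nat.card_pos
  -- conjugation invariance of λ
  have hconj : ∀ (g x : G), sylCount p (g * x * g⁻¹) = sylCount p x := by
    intro g x
    refine (Nat.card_congr (Equiv.subtypeEquiv (MulAction.toPerm g) ?_)).symm
    intro Q
    exact (conj_mem_smul_sylow g x Q).symm
  -- the per-Sylow sums are all equal to the one for P
  have hTQ : ∀ Q : Sylow p G,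
      ∑ x ∈ Finset.univ.filter (· ∈ Q), ((sylCount p x : ℝ))⁻¹
        = ∑ x ∈ Finset.univ.filter (· ∈ P), ((sylCount p x : ℝ))⁻¹ := by
    intro Q
    obtain ⟨g, hg⟩ := MulAction.exists_smul_eq G Q P
    refine Finset.sum_nbij' (fun x => g * x * g⁻¹) (fun y => g⁻¹ * y * g) ?_ ?_ ?_ ?_ ?_
    · intro x hx
      simp only [Finset.mem_filter, Finset.mem_univ, true_and] at hx ⊢
      rw [← hg]
      exact (conj_mem_smul_sylow g x Q).mpr hx
    · intro y hy
      simp only [Finset.mem_filter, Finset.mem_univ, true_and] at hy ⊢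
      rw [← hg] at hy
      have h1 : g * (g⁻¹ * y * g) * g⁻¹ = y := by group
      rw [← conj_mem_smul_sylow g (g⁻¹ * y * g) Q, h1]
      exact hy
    · intro x _; group
    · intro y _; group
    · intro x _; rw [hconj]
  -- double counting: |U| = N * T
  have hdouble : ((sU.card : ℝ))
      = (N : ℝ) * ∑ x ∈ Finset.univ.filter (· ∈ P), ((sylCount p x : ℝ))⁻¹ := by
    have h1 : ((sU.card : ℝ)) = ∑ x ∈ sU, (1 : ℝ) := by simp
    have h2 : ∀ x ∈ sU, (1 : ℝ)
        = ∑ Q ∈ Finset.univ.filter (fun Q : Sylow p G => x ∈ Q), ((sylCount p x : ℝ))⁻¹ := by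
      intro x hx
      obtain ⟨Q, hQ⟩ := (hmemU x).mp (by simpa [hsU] using hx)
      rw [Finset.sum_const, nsmul_eq_mul, ← hlamcard x,
        mul_inv_cancel₀ (by exact_mod_cast (hlampos hQ).ne')]
    rw [h1, Finset.sum_congr rfl h2]
    simp only [Finset.sum_filter]
    rw [Finset.sum_comm]
    have h3 : ∀ Q : Sylow p G,
        (∑ x ∈ sU, if x ∈ Q then ((sylCount p x : ℝ))⁻¹ else 0)
          = ∑ x ∈ Finset.univ.filter (· ∈ P), ((sylCount p x : ℝ))⁻¹ := by
      intro Q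
      rw [← Finset.sum_filter, ← hTQ Q]
      congr 1
      ext x
      simp only [Finset.mem_filter, Finset.mem_univ, true_and, hsU, and_iff_right_iff_imp]
      exact fun hx => (hmemU x).mpr ⟨Q, hx⟩
    rw [Finset.sum_congr rfl (fun Q _ => h3 Q), Finset.sum_const, nsmul_eq_mul,
      Finset.sum_filter]
    congr 1
    rw [hN, Nat.card_eq_fintype_card, Finset.card_univ]
  -- finset version of P and its card
  set sP : Finset G := Finset.univ.filter (· ∈ P) with hsP
  have hkcard : k = sP.card := by
    rw [hk, Nat.card_eq_fintype_card, hsP, Fintype.card_subtype]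
    congr 1
  set T : ℝ := ∑ x ∈ sP, ((sylCount p x : ℝ))⁻¹ with hT
  set Pi : ℕ := ∏ x ∈ sP, sylCount p x with hPi
  -- convert the finprod hypothesis
  have hfin : (∏ᶠ x ∈ ((P : Subgroup G) : Set G), sylCount p x) = Pi := by
    have hset : ((P : Subgroup G) : Set G) = ↑sP := by
      ext x
      simp only [hsP, Finset.coe_filter, Finset.mem_univ, true_and, Set.mem_setOf_eq,
        SetLike.mem_coe]
      exact Iff.rfl
    rw [hset, finprod_mem_coe_finset, hPi]
  rw [hfin] at hlam
  -- positivity facts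
  have hk0 : k ≠ 0 := by
    rw [hk]
    exact Nat.card_pos.ne'
  have hN0 : 0 < N := by
    rw [hN]
    exact Nat.card_pos
  have hPpos : ∀ x ∈ sP, 0 < sylCount p x := by
    intro x hx
    simp only [hsP, Finset.mem_filter, Finset.mem_univ, true_and] at hx
    exact hlampos hx
  have hPi0 : 0 < Pi := Finset.prod_pos hPpos
  have hT0 : 0 ≤ T := Finset.sum_nonneg fun i _ => by positivity
  -- AM-GM
  have hAM : (sP.card : ℝ) ^ sP.card * ∏ x ∈ sP, ((sylCount p x : ℝ))⁻¹
      ≤ (∑ x ∈ sP, ((sylCount p x : ℝ))⁻¹) ^ sP.card :=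
    amgm_pow_card sP _ (fun i _ => by positivity)
  have hprodinv : ∏ x ∈ sP, ((sylCount p x : ℝ))⁻¹ = ((Pi : ℝ))⁻¹ := by
    rw [hPi]
    push_cast
    exact Finset.prod_inv_distrib (s := sP) (f := fun x => (sylCount p x : ℝ))
  rw [hprodinv, ← hkcard, ← hT] at hAM
  have hkey : (k : ℝ) ^ k ≤ T ^ k * Pi := by
    have h := mul_le_mul_of_nonneg_right hAM (by positivity : (0:ℝ) ≤ (Pi : ℝ))
    rwa [mul_assoc, inv_mul_cancel₀ (by exact_mod_cast hPi0.ne'), mul_one] at h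
  -- the number of p-elements
  have hU : Nat.card {g : G | ∃ n : ℕ, orderOf g = p ^ n} = sU.card := by
    rw [Nat.card_eq_fintype_card, hsU, Fintype.card_subtype]
    congr 1
  set U : ℕ := sU.card with hUdef
  -- main real inequality
  have h1 : ((k : ℝ) ^ k) ^ p ≤ (T ^ k * Pi) ^ p := pow_le_pow_left₀ (by positivity) hkey p
  have h2 : ((T : ℝ) ^ k * Pi) ^ p = (T ^ p) ^ k * (Pi : ℝ) ^ p := by
    rw [mul_pow, ← pow_mul, mul_comm k p, pow_mul]
  have h3 : ((Pi : ℝ)) ^ p ≤ (N : ℝ) ^ k := by exact_mod_cast hlam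
  have h4 : ((k : ℝ) ^ k) ^ p ≤ (T ^ p) ^ k * (N : ℝ) ^ k := by
    refine (h1.trans_eq h2).trans ?_
    exact mul_le_mul_of_nonneg_left h3 (by positivity)
  have h5 : ((k : ℝ) ^ k) ^ p * ((N : ℝ) ^ p) ^ k ≤ ((U : ℝ) ^ p) ^ k * (N : ℝ) ^ k := by
    have hUNT : (U : ℝ) = (N : ℝ) * T := hdouble
    calc ((k : ℝ) ^ k) ^ p * ((N : ℝ) ^ p) ^ k
        ≤ (T ^ p) ^ k * (N : ℝ) ^ k * ((N : ℝ) ^ p) ^ k :=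
          mul_le_mul_of_nonneg_right h4 (by positivity)
      _ = ((U : ℝ) ^ p) ^ k * (N : ℝ) ^ k := by
          rw [hUNT]
          ring
  -- transfer back to ℕ
  obtain ⟨q, rfl⟩ : ∃ q, p = q + 1 := ⟨p - 1, (Nat.succ_pred_eq_of_pos hp.pos).symm⟩
  have hq1 : q + 1 - 1 = q := rfl
  rw [hU, hq1]
  rw [← Nat.pow_le_pow_iff_left hk0]
  refine Nat.le_of_mul_le_mul_right ?_ (Nat.pow_pos (n := k) hN0)
  have hnat : ((k : ℕ) ^ k) ^ (q + 1) * ((N : ℕ) ^ (q + 1)) ^ k ≤ (U ^ (q + 1)) ^ k * N ^ k := by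
    exact_mod_cast h5
  calc (k ^ (q + 1) * N ^ q) ^ k * N ^ k
      = (k ^ k) ^ (q + 1) * (N ^ (q + 1)) ^ k := by ring
    _ ≤ (U ^ (q + 1)) ^ k * N ^ k := hnat
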